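/- Let X be a Hilbert space, A : X → 2^X maximally monotone with zer(A) ≠ ∅, γ_n = (n+2)/(n+1), α_n = 1 - 2/(n+2), u, x ∈ X, and define x_0 = x, x_{n+1} = (1-α_n)u + α_n J_{γ_n A}(x_n), where J_{γA} = (Id + γA)^{-1} is the resolvent. If p ∈ zer(A) and M ≥ max{‖x - p‖, ‖u - p‖}, then for all n: ‖x_{n+1} - x_n‖ ≤ 6M/(n+2) and ‖x_n - J_{γ_n A}(x_n)‖ ≤ 10M/(n+2). -/

import Mathlib

set_option maxHeartbeats 1000000 in
theorem stmt19 {X : Type*} [NormedAddCommGroup X] [InnerProductSpace ℝ X] [CompleteSpace X]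
    (A : X → Set X)
    (hmono : ∀ (x y u v : X), u ∈ A x → v ∈ A y → 0 ≤ (inner ℝ (u - v) (x - y) : ℝ))
    (hmax : ∀ (x u : X), (∀ (y v : X), v ∈ A y → 0 ≤ (inner ℝ (u - v) (x - y) : ℝ)) → u ∈ A x)
    (γ : ℕ → ℝ) (hγ : ∀ n, γ n = (n + 2) / (n + 1))
    (α : ℕ → ℝ) (hα : ∀ n, α n = 1 - 2 / (n + 2))
    (J : ℕ → X → X)
    (hres : ∀ (n : ℕ) (y : X), (γ n)⁻¹ • (y - J n y) ∈ A (J n y))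
    (u x₀ : X) (x : ℕ → X) (hx0 : x 0 = x₀)
    (hxrec : ∀ n, x (n + 1) = (1 - α n) • u + α n • J n (x n))
    (p : X) (hp : (0 : X) ∈ A p)
    (M : ℝ) (hM : 0 < M) (hM1 : ‖x₀ - p‖ ≤ M) (hM2 : ‖u - p‖ ≤ M) :
    ∀ n, ‖x (n + 1) - x n‖ ≤ 6 * M / (n + 2) ∧
      ‖x n - J n (x n)‖ ≤ 10 * M / (n + 2) := by
  have hγpos : ∀ n : ℕ, (0:ℝ) < γ n := by
    intro n; rw [hγ]; positivity
  -- J n p = p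
  have hJp : ∀ n, J n p = p := by
    intro n
    have h := hmono (J n p) p ((γ n)⁻¹ • (p - J n p)) 0 (hres n p) hp
    rw [sub_zero, real_inner_smul_left] at h
    have hip : (inner ℝ (p - J n p) (J n p - p) : ℝ) = -(‖J n p - p‖^2) := by
      rw [show p - J n p = -(J n p - p) from by abel, inner_neg_left,
        real_inner_self_eq_norm_sq]
    rw [hip] at h
    have hγ' := inv_pos.mpr (hγpos n)
    have h2 : ‖J n p - p‖^2 ≤ 0 := by nlinarith
    have h3 : ‖J n p - p‖ = 0 := by nlinarith [norm_nonneg (J n p - p)]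
    exact sub_eq_zero.mp (norm_eq_zero.mp h3)
  -- nonexpansiveness
  have hnon : ∀ n (y z : X), ‖J n y - J n z‖ ≤ ‖y - z‖ := by
    intro n y z
    have h := hmono (J n y) (J n z) _ _ (hres n y) (hres n z)
    rw [← smul_sub, real_inner_smul_left] at h
    have hγ' := inv_pos.mpr (hγpos n)
    have h2 : 0 ≤ (inner ℝ ((y - J n y) - (z - J n z)) (J n y - J n z) : ℝ) := by
      by_contra hneg
      push_neg at hneg
      nlinarith
    have hid : (y - J n y) - (z - J n z) = (y - z) - (J n y - J n z) := by abel
    rw [hid, inner_sub_left, real_inner_self_eq_norm_sq] at h2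
    have h3 := real_inner_le_norm (y - z) (J n y - J n z)
    rcases (norm_nonneg (J n y - J n z)).eq_or_lt with h0 | h0
    · rw [← h0]; exact norm_nonneg _
    · nlinarith
  -- joint firm nonexpansiveness
  have hjoint : ∀ n m (y : X), ‖J n y - J m y‖ ≤ (|γ n - γ m| / γ n) * ‖y - J n y‖ := by
    intro n m y
    have h := hmono (J n y) (J m y) _ _ (hres n y) (hres m y)
    set a := y - J n y with ha
    set d := J n y - J m y with hd
    have hid : (γ n)⁻¹ • (y - J n y) - (γ m)⁻¹ • (y - J m y)
        = ((γ n)⁻¹ - (γ m)⁻¹) • a - (γ m)⁻¹ • d := by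
      rw [ha, hd]; module
    rw [hid, inner_sub_left, real_inner_smul_left, real_inner_smul_left,
      real_inner_self_eq_norm_sq] at h
    have hγn := hγpos n
    have hγm := hγpos m
    have habs : |(γ n)⁻¹ - (γ m)⁻¹| * γ m = |γ n - γ m| / γ n := by
      have e1 : (γ n)⁻¹ - (γ m)⁻¹ = (γ m - γ n) / (γ n * γ m) := by
        field_simp [hγn.ne', hγm.ne']
      rw [e1, abs_div, abs_of_pos (mul_pos hγn hγm), abs_sub_comm]
      field_simp [hγn.ne', hγm.ne']
    have hIa : ((γ n)⁻¹ - (γ m)⁻¹) * (inner ℝ a d : ℝ)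
        ≤ |(γ n)⁻¹ - (γ m)⁻¹| * (‖a‖ * ‖d‖) := by
      calc ((γ n)⁻¹ - (γ m)⁻¹) * (inner ℝ a d : ℝ)
          ≤ |((γ n)⁻¹ - (γ m)⁻¹) * (inner ℝ a d : ℝ)| := le_abs_self _
        _ = |(γ n)⁻¹ - (γ m)⁻¹| * |(inner ℝ a d : ℝ)| := abs_mul _ _
        _ ≤ |(γ n)⁻¹ - (γ m)⁻¹| * (‖a‖ * ‖d‖) :=
            mul_le_mul_of_nonneg_left (abs_real_inner_le_norm a d) (abs_nonneg _)
    rcases (norm_nonneg d).eq_or_lt with h0 | h0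
    · rw [← h0]; positivity
    · have key : (γ m)⁻¹ * ‖d‖^2 ≤ |(γ n)⁻¹ - (γ m)⁻¹| * (‖a‖ * ‖d‖) := by linarith
      have key2 : ‖d‖^2 ≤ γ m * (|(γ n)⁻¹ - (γ m)⁻¹| * (‖a‖ * ‖d‖)) := by
        have h4 := mul_le_mul_of_nonneg_left key (le_of_lt hγm)
        rwa [← mul_assoc, mul_inv_cancel₀ (ne_of_gt hγm), one_mul] at h4
      rw [← habs]
      nlinarith [key2, h0]
  -- α bounds
  have hαmem : ∀ n : ℕ, 0 ≤ α n ∧ α n < 1 := by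
    intro n
    have hn : (0:ℝ) ≤ (n:ℝ) := Nat.cast_nonneg n
    rw [hα]
    constructor
    · have h1 : (2:ℝ)/((n:ℝ)+2) ≤ 1 := by
        rw [div_le_one (by linarith)]; linarith
      linarith
    · have h2 : (0:ℝ) < 2/((n:ℝ)+2) := by positivity
      linarith
  -- ‖x n - p‖ ≤ M
  have hxp : ∀ n, ‖x n - p‖ ≤ M := by
    intro n
    induction n with
    | zero => rw [hx0]; exact hM1
    | succ n ih =>
      obtain ⟨hα0, hα1⟩ := hαmem n
      have hid : x (n+1) - p = (1 - α n) • (u - p) + α n • (J n (x n) - p) := by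
        rw [hxrec]; module
      have hJ : ‖J n (x n) - p‖ ≤ ‖x n - p‖ := by
        conv_lhs => rw [← hJp n]
        exact hnon n (x n) p
      calc ‖x (n+1) - p‖ ≤ ‖(1 - α n) • (u - p)‖ + ‖α n • (J n (x n) - p)‖ := by
            rw [hid]; exact norm_add_le _ _
        _ = (1 - α n) * ‖u - p‖ + α n * ‖J n (x n) - p‖ := by
            rw [norm_smul, norm_smul, Real.norm_eq_abs, Real.norm_eq_abs,
              abs_of_nonneg (by linarith), abs_of_nonneg hα0]
        _ ≤ (1 - α n) * M + α n * M :=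
            add_le_add (mul_le_mul_of_nonneg_left hM2 (by linarith))
              (mul_le_mul_of_nonneg_left (hJ.trans ih) hα0)
        _ = M := by ring
  have hJxp : ∀ n m : ℕ, ‖J n (x m) - p‖ ≤ M := by
    intro n m
    have h := hnon n (x m) p
    rw [hJp n] at h
    exact h.trans (hxp m)
  have huJ : ∀ n m : ℕ, ‖u - J n (x m)‖ ≤ 2*M := by
    intro n m
    have e : u - J n (x m) = (u - p) - (J n (x m) - p) := by abel
    rw [e]
    have := norm_sub_le (u - p) (J n (x m) - p)
    linarith [hJxp n m]
  have hxJ : ∀ n m : ℕ, ‖x m - J n (x m)‖ ≤ 2*M := by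
    intro n m
    have e : x m - J n (x m) = (x m - p) - (J n (x m) - p) := by abel
    rw [e]
    have := norm_sub_le (x m - p) (J n (x m) - p)
    linarith [hJxp n m, hxp m]
  -- main increment bound
  have main1 : ∀ n : ℕ, ‖x (n+1) - x n‖ ≤ 6 * M / ((n:ℝ) + 2) := by
    intro n
    induction n with
    | zero =>
      have hα0 : α 0 = 0 := by rw [hα]; norm_num
      have hx1 : x 1 = u := by rw [hxrec, hα0]; simp
      have h := norm_sub_le (u - p) (x₀ - p)
      have h2M : (2:ℝ)*M ≤ 6 * M / (((0:ℕ):ℝ) + 2) := by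
        push_cast
        rw [show (0:ℝ) + 2 = 2 from by norm_num]
        linarith
      calc ‖x (0+1) - x 0‖ = ‖(u - p) - (x₀ - p)‖ := by
            rw [hx1, hx0]; congr 1; abel
        _ ≤ 2*M := by linarith
        _ ≤ _ := h2M
    | succ n ih =>
      have hn : (0:ℝ) ≤ ((n:ℝ)) := Nat.cast_nonneg n
      have h1 : (0:ℝ) < ((n:ℝ)) + 1 := by linarith
      have h2 : (0:ℝ) < ((n:ℝ)) + 2 := by linarith
      have h3 : (0:ℝ) < ((n:ℝ)) + 3 := by linarith
      have hα2 : α (n+1) = (((n:ℝ))+1)/(((n:ℝ))+3) := by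
        rw [hα]
        push_cast
        rw [show (n:ℝ)+1+2 = (n:ℝ)+3 from by ring]
        field_simp
        ring
      have hδ : α (n+1) - α n = 2/((((n:ℝ))+2)*(((n:ℝ))+3)) := by
        rw [hα, hα]
        push_cast
        rw [show (n:ℝ)+1+2 = (n:ℝ)+3 from by ring]
        field_simp
        ring
      have hγd : |γ (n+1) - γ n| / γ (n+1) = 1/((((n:ℝ))+1)*(((n:ℝ))+3)) := by
        have e : γ (n+1) - γ n = -(1/((((n:ℝ))+1)*(((n:ℝ))+2))) := by
          rw [hγ, hγ]
          push_cast
          rw [show (n:ℝ)+1+2 = (n:ℝ)+3 from by ring,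
            show (n:ℝ)+1+1 = (n:ℝ)+2 from by ring]
          field_simp
          ring
        rw [e, abs_neg, abs_of_pos (by positivity), hγ]
        push_cast
        rw [show (n:ℝ)+1+2 = (n:ℝ)+3 from by ring,
          show (n:ℝ)+1+1 = (n:ℝ)+2 from by ring]
        rw [div_eq_div_iff (by positivity) (by positivity)]
        field_simp
      have hsplit : x (n+2) - x (n+1) = α (n+1) • (J (n+1) (x (n+1)) - J n (x n))
          + (α n - α (n+1)) • (u - J n (x n)) := by
        rw [hxrec (n+1), hxrec n]; module
      have hJd : ‖J (n+1) (x (n+1)) - J n (x n)‖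
          ≤ ‖x (n+1) - x n‖ + 1/((((n:ℝ))+1)*(((n:ℝ))+3)) * (2*M) := by
        have t1 : ‖J (n+1) (x (n+1)) - J n (x n)‖
            ≤ ‖J (n+1) (x (n+1)) - J (n+1) (x n)‖ + ‖J (n+1) (x n) - J n (x n)‖ := by
          have := dist_triangle (J (n+1) (x (n+1))) (J (n+1) (x n)) (J n (x n))
          simpa [dist_eq_norm] using this
        have t2 := hnon (n+1) (x (n+1)) (x n)
        have t3 := hjoint (n+1) n (x n)
        rw [hγd] at t3
        have t4 : (1/((((n:ℝ))+1)*(((n:ℝ))+3))) * ‖x n - J (n+1) (x n)‖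
            ≤ 1/((((n:ℝ))+1)*(((n:ℝ))+3)) * (2*M) :=
          mul_le_mul_of_nonneg_left (hxJ (n+1) n) (by positivity)
        linarith
      have hbig : ‖x (n+2) - x (n+1)‖
          ≤ α (n+1) * (‖x (n+1) - x n‖ + 1/((((n:ℝ))+1)*(((n:ℝ))+3)) * (2*M))
            + (α (n+1) - α n) * (2*M) := by
        rw [hsplit]
        have hna := norm_add_le (α (n+1) • (J (n+1) (x (n+1)) - J n (x n)))
          ((α n - α (n+1)) • (u - J n (x n)))
        rw [norm_smul, norm_smul, Real.norm_eq_abs, Real.norm_eq_abs] at hna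
        have ha1 : |α (n+1)| = α (n+1) := abs_of_nonneg (hαmem (n+1)).1
        have ha2 : |α n - α (n+1)| = α (n+1) - α n := by
          rw [abs_sub_comm]
          exact abs_of_nonneg (by rw [hδ]; positivity)
        rw [ha1, ha2] at hna
        have hm1 : α (n+1) * ‖J (n+1) (x (n+1)) - J n (x n)‖
            ≤ α (n+1) * (‖x (n+1) - x n‖ + 1/((((n:ℝ))+1)*(((n:ℝ))+3)) * (2*M)) :=
          mul_le_mul_of_nonneg_left hJd (hαmem (n+1)).1
        have hm2 : (α (n+1) - α n) * ‖u - J n (x n)‖ ≤ (α (n+1) - α n) * (2*M) :=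
          mul_le_mul_of_nonneg_left (huJ n n) (by rw [hδ]; positivity)
        linarith
      have key : (((n:ℝ))+1)/(((n:ℝ))+3) * (6*M/(((n:ℝ))+2) + 1/((((n:ℝ))+1)*(((n:ℝ))+3)) * (2*M))
          + 2/((((n:ℝ))+2)*(((n:ℝ))+3)) * (2*M) ≤ 6*M/(((n:ℝ))+3) := by
        have e : 6*M/(((n:ℝ))+3) - ((((n:ℝ))+1)/(((n:ℝ))+3) * (6*M/(((n:ℝ))+2) + 1/((((n:ℝ))+1)*(((n:ℝ))+3)) * (2*M))
            + 2/((((n:ℝ))+2)*(((n:ℝ))+3)) * (2*M)) = 2*M/((((n:ℝ))+2)*(((n:ℝ))+3)^2) := by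
          field_simp [h1.ne', h2.ne', h3.ne']
          ring
        have hpos : (0:ℝ) ≤ 2*M/((((n:ℝ))+2)*(((n:ℝ))+3)^2) := by positivity
        linarith
      have hmono2 : α (n+1) * (‖x (n+1) - x n‖ + 1/((((n:ℝ))+1)*(((n:ℝ))+3)) * (2*M))
          ≤ α (n+1) * (6*M/(((n:ℝ))+2) + 1/((((n:ℝ))+1)*(((n:ℝ))+3)) * (2*M)) :=
        mul_le_mul_of_nonneg_left (by linarith [ih]) (hαmem (n+1)).1
      have final : ‖x (n+2) - x (n+1)‖ ≤ 6*M/(((n:ℝ))+3) := by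
        calc ‖x (n+2) - x (n+1)‖
            ≤ α (n+1) * (‖x (n+1) - x n‖ + 1/((((n:ℝ))+1)*(((n:ℝ))+3)) * (2*M))
              + (α (n+1) - α n) * (2*M) := hbig
          _ ≤ α (n+1) * (6*M/(((n:ℝ))+2) + 1/((((n:ℝ))+1)*(((n:ℝ))+3)) * (2*M))
              + (α (n+1) - α n) * (2*M) := by linarith
          _ = (((n:ℝ))+1)/(((n:ℝ))+3) * (6*M/(((n:ℝ))+2) + 1/((((n:ℝ))+1)*(((n:ℝ))+3)) * (2*M))
              + 2/((((n:ℝ))+2)*(((n:ℝ))+3)) * (2*M) := by rw [hδ, hα2]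
          _ ≤ 6*M/(((n:ℝ))+3) := key
      push_cast
      rw [show (n:ℝ)+1+2 = (n:ℝ)+3 from by ring]
      exact final
  intro n
  refine ⟨main1 n, ?_⟩
  have hn : (0:ℝ) ≤ (n:ℝ) := Nat.cast_nonneg n
  obtain ⟨hα0, hα1⟩ := hαmem n
  have e : x (n+1) - J n (x n) = (1 - α n) • (u - J n (x n)) := by
    rw [hxrec]; module
  have h1 : ‖x (n+1) - J n (x n)‖ = (1 - α n) * ‖u - J n (x n)‖ := by
    rw [e, norm_smul, Real.norm_eq_abs, abs_of_nonneg (by linarith)]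
  have h2 : (1 - α n) * ‖u - J n (x n)‖ ≤ (1 - α n) * (2*M) :=
    mul_le_mul_of_nonneg_left (huJ n n) (by linarith)
  have h3 : 1 - α n = 2/((n:ℝ)+2) := by rw [hα]; ring
  have h4 : ‖x n - J n (x n)‖ ≤ ‖x n - x (n+1)‖ + ‖x (n+1) - J n (x n)‖ := by
    have := dist_triangle (x n) (x (n+1)) (J n (x n))
    simpa [dist_eq_norm] using this
  have h5 : ‖x n - x (n+1)‖ = ‖x (n+1) - x n‖ := norm_sub_rev _ _
  have h6 := main1 n
  have h7 : (2/((n:ℝ)+2)) * (2*M) = 4*M/((n:ℝ)+2) := by ring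
  have h8 : 6*M/((n:ℝ)+2) + 4*M/((n:ℝ)+2) = 10*M/((n:ℝ)+2) := by ring
  rw [h3, h7] at h2
  rw [h3] at h1
  linarith
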